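/- Let ~ be an equivalence relation on V^n with classes C_1,...,C_N, uniform distributions Q_k on C_k, and suppose there are constants α_1,...,α_N ≥ 1 and ~-exchangeable probability distributions π_1,...,π_N with Q_k ≤ α_k π_k pointwise for each k. Then for every ~-exchangeable distribution P on V^n, P ≤ N α^2 Σ_{k=1}^N (1/N) F(P, π_k)^2 π_k pointwise, where α = max_k α_k. -/

import Mathlib

open scoped Classical BigOperators

noncomputable section

/-- The uniform probability distribution on the equivalence class `c` of the setoid `s`. -/
noncomputable def unifClass {W : Type*} [Fintype W] (s : Setoid W) (c : Quotient s) :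
    W → ℝ :=
  fun v => if Quotient.mk s v = c
    then (1 : ℝ) / (Finset.univ.filter (fun w => Quotient.mk s w = c)).card else 0

/-- The fidelity between two distributions on a finite set. -/
noncomputable def fidelity {W : Type*} [Fintype W] (P Q : W → ℝ) : ℝ :=
  ∑ v, Real.sqrt (P v) * Real.sqrt (Q v)

/-- General flexible de Finetti reduction: if each extreme point `Q_k` of the set of
`∼`-exchangeable distributions is bounded by `α_k π_k` for exchangeable distributions
`π_k`, then every `∼`-exchangeable distribution `P` satisfies
`P ≤ N α² ∑_k (1/N) F(P, π_k)² π_k` pointwise, where `α = max_k α_k`. -/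
theorem stmt2 {V : Type*} [Fintype V] (n : ℕ) (s : Setoid (Fin n → V))
    (α : Quotient s → ℝ) (hα : ∀ k, 1 ≤ α k)
    (π : Quotient s → (Fin n → V) → ℝ)
    (hπ0 : ∀ k v, 0 ≤ π k v) (hπ1 : ∀ k, ∑ v, π k v = 1)
    (hπexch : ∀ k v w, s.r v w → π k v = π k w)
    (hQπ : ∀ k v, unifClass s k v ≤ α k * π k v)
    (P : (Fin n → V) → ℝ) (hP0 : ∀ v, 0 ≤ P v) (hP1 : ∑ v, P v = 1)
    (hPexch : ∀ v w, s.r v w → P v = P w)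
    (N : ℕ) (hN : N = Fintype.card (Quotient s))
    (αmax : ℝ) (hαmax : αmax = ⨆ k, α k) :
    ∀ v, P v ≤ N * αmax^2 * ∑ k : Quotient s,
      (1 / (N : ℝ)) * (fidelity P (π k))^2 * π k v := by
  intro v
  set k₀ : Quotient s := Quotient.mk s v with hk₀
  set C : Finset (Fin n → V) := Finset.univ.filter (fun w => Quotient.mk s w = k₀) with hCdef
  have hvC : v ∈ C := by simp [hCdef]; rfl
  have hcard1 : (1:ℝ) ≤ (C.card : ℝ) := by
    exact_mod_cast Finset.card_pos.mpr ⟨v, hvC⟩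
  have hcard0 : (0:ℝ) < (C.card : ℝ) := lt_of_lt_of_le one_pos hcard1
  have hα0 : (0:ℝ) < α k₀ := lt_of_lt_of_le one_pos (hα k₀)
  -- values on the class
  have hPC : ∀ w ∈ C, P w = P v := by
    intro w hw
    have hq : Quotient.mk s w = Quotient.mk s v := by
      have := (Finset.mem_filter.mp hw).2
      rw [this]
    exact hPexch w v (Quotient.exact hq)
  have hπC : ∀ w ∈ C, π k₀ w = π k₀ v := by
    intro w hw
    have hq : Quotient.mk s w = Quotient.mk s v := by
      have := (Finset.mem_filter.mp hw).2
      rw [this]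
    exact hπexch k₀ w v (Quotient.exact hq)
  -- lower bound on π k₀ v
  have hQv : (1:ℝ) / (C.card : ℝ) ≤ α k₀ * π k₀ v := by
    have := hQπ k₀ v
    simpa [unifClass, hk₀, hCdef] using this
  have hπv0 : (0:ℝ) ≤ π k₀ v := hπ0 k₀ v
  have hav : (1:ℝ) / ((C.card : ℝ) * α k₀) ≤ π k₀ v := by
    rw [div_le_iff₀ (by positivity)]
    calc (1:ℝ) = ((1:ℝ)/(C.card:ℝ)) * (C.card:ℝ) := by field_simp
    _ ≤ (α k₀ * π k₀ v) * (C.card:ℝ) := by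
        apply mul_le_mul_of_nonneg_right hQv hcard0.le
    _ = π k₀ v * ((C.card:ℝ) * α k₀) := by ring
  -- fidelity lower bound
  have hF1 : (C.card : ℝ) * (Real.sqrt (P v) * Real.sqrt (π k₀ v)) ≤ fidelity P (π k₀) := by
    have hsub : C ⊆ Finset.univ := Finset.subset_univ C
    calc (C.card : ℝ) * (Real.sqrt (P v) * Real.sqrt (π k₀ v))
        = ∑ w ∈ C, Real.sqrt (P w) * Real.sqrt (π k₀ w) := by
          rw [Finset.sum_congr rfl (fun w hw => by rw [hPC w hw, hπC w hw])]
          simp [mul_comm]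
    _ ≤ ∑ w, Real.sqrt (P w) * Real.sqrt (π k₀ w) := by
          apply Finset.sum_le_sum_of_subset_of_nonneg hsub
          intro w _ _
          positivity
    _ = fidelity P (π k₀) := rfl
  have hF0 : (0:ℝ) ≤ (C.card : ℝ) * (Real.sqrt (P v) * Real.sqrt (π k₀ v)) := by positivity
  have hF2 : (C.card : ℝ)^2 * P v * π k₀ v ≤ (fidelity P (π k₀))^2 := by
    have := mul_self_le_mul_self hF0 hF1
    calc (C.card : ℝ)^2 * P v * π k₀ v
        = ((C.card : ℝ) * (Real.sqrt (P v) * Real.sqrt (π k₀ v))) *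
          ((C.card : ℝ) * (Real.sqrt (P v) * Real.sqrt (π k₀ v))) := by
          rw [show ((C.card : ℝ) * (Real.sqrt (P v) * Real.sqrt (π k₀ v))) *
            ((C.card : ℝ) * (Real.sqrt (P v) * Real.sqrt (π k₀ v)))
            = (C.card : ℝ)^2 * (Real.sqrt (P v) * Real.sqrt (P v)) *
              (Real.sqrt (π k₀ v) * Real.sqrt (π k₀ v)) by ring,
            Real.mul_self_sqrt (hP0 v), Real.mul_self_sqrt hπv0]
    _ ≤ (fidelity P (π k₀)) * (fidelity P (π k₀)) := this
    _ = (fidelity P (π k₀))^2 := (sq (fidelity P (π k₀))).symm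
  -- key: F² * π k₀ v ≥ P v / α²
  have hkey : P v / (α k₀)^2 ≤ (fidelity P (π k₀))^2 * π k₀ v := by
    have h1 : (C.card : ℝ)^2 * P v * π k₀ v * π k₀ v ≤ (fidelity P (π k₀))^2 * π k₀ v :=
      mul_le_mul_of_nonneg_right hF2 hπv0
    have h2 : P v / (α k₀)^2 ≤ (C.card : ℝ)^2 * P v * π k₀ v * π k₀ v := by
      have haa : (1:ℝ) / ((C.card : ℝ) * α k₀) * (1 / ((C.card : ℝ) * α k₀))
          ≤ π k₀ v * π k₀ v := mul_self_le_mul_self (by positivity) hav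
      have h3 : (C.card : ℝ)^2 * P v * (1 / ((C.card : ℝ) * α k₀) * (1 / ((C.card : ℝ) * α k₀)))
          ≤ (C.card : ℝ)^2 * P v * (π k₀ v * π k₀ v) := by
        apply mul_le_mul_of_nonneg_left haa (mul_nonneg (by positivity) (hP0 v))
      calc P v / (α k₀)^2
          = (C.card : ℝ)^2 * P v * (1 / ((C.card : ℝ) * α k₀) * (1 / ((C.card : ℝ) * α k₀))) := by
            field_simp
      _ ≤ (C.card : ℝ)^2 * P v * (π k₀ v * π k₀ v) := h3
      _ = (C.card : ℝ)^2 * P v * π k₀ v * π k₀ v := by ring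
    linarith
  -- N positive
  have hN0 : (0:ℝ) < (N:ℝ) := by
    have : 0 < Fintype.card (Quotient s) := Fintype.card_pos_iff.mpr ⟨k₀⟩
    rw [hN]; exact_mod_cast this
  -- αmax ≥ α k₀
  have hαm : α k₀ ≤ αmax := by
    rw [hαmax]
    exact le_ciSup (Set.Finite.bddAbove (Set.finite_range α)) k₀
  have hαm1 : (1:ℝ) ≤ αmax := le_trans (hα k₀) hαm
  -- sum lower bound
  have hsum : (1/(N:ℝ)) * (fidelity P (π k₀))^2 * π k₀ v ≤
      ∑ k : Quotient s, (1 / (N:ℝ)) * (fidelity P (π k))^2 * π k v := by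
    apply Finset.single_le_sum (f := fun k => (1/(N:ℝ)) * (fidelity P (π k))^2 * π k v)
    · intro k _
      have : (0:ℝ) ≤ π k v := hπ0 k v
      positivity
    · exact Finset.mem_univ k₀
  -- finish
  calc P v = (α k₀)^2 / (α k₀)^2 * P v := by field_simp
  _ ≤ αmax^2 / (α k₀)^2 * P v := by
      apply mul_le_mul_of_nonneg_right _ (hP0 v)
      have hle : (α k₀)^2 ≤ αmax^2 := by nlinarith
      exact (div_le_div_iff_of_pos_right (by positivity)).mpr hle
  _ = αmax^2 * (P v / (α k₀)^2) := by ring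
  _ ≤ αmax^2 * ((fidelity P (π k₀))^2 * π k₀ v) := by
      apply mul_le_mul_of_nonneg_left hkey (by positivity)
  _ = (N:ℝ) * αmax^2 * ((1/(N:ℝ)) * (fidelity P (π k₀))^2 * π k₀ v) := by
      field_simp
  _ ≤ (N:ℝ) * αmax^2 * ∑ k : Quotient s, (1 / (N:ℝ)) * (fidelity P (π k))^2 * π k v := by
      apply mul_le_mul_of_nonneg_left hsum (by positivity)
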